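/- Let T be a finite type set with |T| = m, let f be the uniform distribution on T, let O be a finite outcome set, and let v : T × O → ℝ≥0 be a valuation. For every ε ≥ 0 and every mechanism M on this data that is ε-EEIC and IR, there exists a mechanism M' on the same data that is BIC and IR and satisfies W(M') ≥ W(M) and R(M') ≥ R(M) − m·ε. -/

import Mathlib

open Finset

namespace EEICAux

variable {T : Type}

/-- Sum of `g` along consecutive pairs of a list. -/
noncomputable def chainW (g : T → T → ℝ) : List T → ℝ
  | [] => 0
  | [_] => 0
  | a :: b :: l => g a b + chainW g (b :: l)

variable (g : T → T → ℝ)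

@[simp] lemma chainW_nil : chainW g [] = 0 := rfl
@[simp] lemma chainW_single (a : T) : chainW g [a] = 0 := rfl
@[simp] lemma chainW_cons2 (a b : T) (l : List T) :
    chainW g (a :: b :: l) = g a b + chainW g (b :: l) := rfl

lemma chainW_cons_of_ne_nil (a : T) (l : List T) (hl : l ≠ []) :
    chainW g (a :: l) = g a (l.head hl) + chainW g l := by
  cases l with
  | nil => simp at hl
  | cons b l' => rfl

/-- snoc -/
lemma chainW_snoc (M : List T) (hM : M ≠ []) (y : T) :
    chainW g (M ++ [y]) = chainW g M + g (M.getLast hM) y := by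
  induction M with
  | nil => simp at hM
  | cons a M ih =>
    cases M with
    | nil => simp
    | cons b M' =>
      have h' : (b :: M') ≠ [] := by simp
      simp only [List.cons_append, chainW_cons2]
      rw [← List.cons_append, ih h']
      rw [List.getLast_cons h']
      ring

/-- split at an interior point -/
lemma chainW_split (A : List T) (y : T) (B : List T) :
    chainW g (A ++ y :: B) = chainW g (A ++ [y]) + chainW g (y :: B) := by
  induction A with
  | nil => simp
  | cons a A ih =>
    cases A with
    | nil =>
      simp only [List.nil_append, List.cons_append, chainW_cons2, chainW_single]
      ring
    | cons b A' =>
      simp only [List.cons_append, chainW_cons2] at *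
      rw [ih]; ring

lemma list_map_sum_getD [Inhabited T] (F : T → ℝ) (L : List T) :
    (L.map F).sum = ∑ i ∈ Finset.range L.length, F (L.getD i default) := by
  induction L with
  | nil => simp
  | cons a L ih =>
    simp only [List.map_cons, List.sum_cons, List.length_cons]
    rw [Finset.sum_range_succ']
    simp only [List.getD_cons_succ, List.getD_cons_zero]
    rw [ih]; ring

lemma chainW_getD [Inhabited T] (L : List T) :
    chainW g L = ∑ i ∈ Finset.range (L.length - 1),
      g (L.getD i default) (L.getD (i + 1) default) := by
  induction L with
  | nil => simp
  | cons a L ih =>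
    cases L with
    | nil => simp
    | cons b L' =>
      simp only [chainW_cons2, List.length_cons, Nat.add_sub_cancel]
      rw [Finset.sum_range_succ']
      simp only [List.getD_cons_succ, List.getD_cons_zero]
      rw [ih]
      simp only [List.length_cons, Nat.add_sub_cancel, List.getD_cons_succ]
      ring

/-- Telescoping upper bound for `chainW`. -/
lemma chainW_le (φ ψ : T → ℝ) (hg : ∀ a b, g a b ≤ φ a + ψ a - ψ b) :
    ∀ (l : List T) (a : T),
      chainW g (a :: l) ≤ ((a :: l).map φ).sum
        - φ ((a :: l).getLast (List.cons_ne_nil a l))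
        + ψ a - ψ ((a :: l).getLast (List.cons_ne_nil a l)) := by
  intro l
  induction l with
  | nil => intro a; simp
  | cons b l ih =>
    intro a
    have h1 := ih b
    have h2 := hg a b
    have hlast : (a :: b :: l).getLast (List.cons_ne_nil _ _)
        = (b :: l).getLast (List.cons_ne_nil _ _) := by
      rw [List.getLast_cons]
    rw [hlast]
    simp only [chainW_cons2, List.map_cons, List.sum_cons] at *
    linarith

end EEICAux

namespace EEICAux2
open EEICAux

lemma cycle_bound {T : Type} [Fintype T] [DecidableEq T] [Inhabited T]
    (u : T → T → ℝ) (π : Equiv.Perm T)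
    (hπ : ∀ ρ : Equiv.Perm T, (∑ t, u t (ρ t)) ≤ ∑ t, u t (π t))
    (L : List T) (hne : L ≠ []) (hnd : L.Nodup) :
    chainW (fun t s => u t (π s) - u s (π s)) L
      + (u (L.getLast hne) (π (L.head hne)) - u (L.head hne) (π (L.head hne))) ≤ 0 := by
  obtain ⟨n, hn⟩ : ∃ n, L.length = n + 1 :=
    ⟨L.length - 1, (Nat.succ_pred_eq_of_pos (List.length_pos_iff.mpr hne)).symm⟩
  set g : T → T → ℝ := fun t s => u t (π s) - u s (π s) with hg
  set ℓ : ℕ → T := fun i => L.getD i default with hℓ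
  set F : T → ℝ := fun t => u t (π (L.formPerm t)) - u t (π t) with hF
  have hsum0 : ∑ t, F t ≤ 0 := by
    have h0 := hπ (π * L.formPerm)
    simp only [Equiv.Perm.mul_apply] at h0
    have : ∑ t, (u t (π (L.formPerm t)) - u t (π t)) ≤ 0 := by
      rw [Finset.sum_sub_distrib]; linarith
    simpa [hF] using this
  have hzero : ∀ t ∈ Finset.univ, t ∉ L.toFinset → F t = 0 := by
    intro t _ ht
    have hfix : L.formPerm t = t := List.formPerm_apply_of_notMem (by simpa using ht)
    simp [hF, hfix]
  have h2 : ∑ t ∈ L.toFinset, F t ≤ 0 := by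
    rw [Finset.sum_subset (Finset.subset_univ _) hzero]; exact hsum0
  have h3 : ∑ t ∈ L.toFinset, F t = ∑ i ∈ Finset.range L.length, F (ℓ i) := by
    rw [List.sum_toFinset _ hnd, list_map_sum_getD]
  have hform : ∀ i ∈ Finset.range L.length,
      F (ℓ i) = u (ℓ i) (π (ℓ ((i + 1) % L.length))) - u (ℓ i) (π (ℓ i)) := by
    intro i hi
    rw [Finset.mem_range] at hi
    have hpos : 0 < L.length := Nat.pos_of_ne_zero (by simp [hne])
    have hmod : (i + 1) % L.length < L.length := Nat.mod_lt _ hpos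
    have e1 : ℓ i = L[i] := List.getD_eq_getElem L default hi
    have e2 : ℓ ((i + 1) % L.length) = L[(i + 1) % L.length] :=
      List.getD_eq_getElem L default hmod
    have e3 := List.formPerm_apply_getElem L hnd i hi
    rw [hF, e1, e2]
    simp only []
    rw [e3]
  have hA : ∑ i ∈ Finset.range L.length, u (ℓ i) (π (ℓ ((i + 1) % L.length)))
      = (∑ i ∈ Finset.range n, u (ℓ i) (π (ℓ (i + 1)))) + u (ℓ n) (π (ℓ 0)) := by
    rw [hn, Finset.sum_range_succ, Nat.mod_self]
    congr 1
    apply Finset.sum_congr rfl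
    intro i hi
    rw [Finset.mem_range] at hi
    rw [Nat.mod_eq_of_lt (by omega)]
  have hD : ∑ i ∈ Finset.range L.length, u (ℓ i) (π (ℓ i))
      = (∑ i ∈ Finset.range n, u (ℓ (i + 1)) (π (ℓ (i + 1)))) + u (ℓ 0) (π (ℓ 0)) := by
    rw [hn, Finset.sum_range_succ']
  have hch : chainW g L = ∑ i ∈ Finset.range n,
      (u (ℓ i) (π (ℓ (i + 1))) - u (ℓ (i + 1)) (π (ℓ (i + 1)))) := by
    rw [chainW_getD, hn]
    simp only [Nat.add_sub_cancel]
    rfl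
  have key : ∑ i ∈ Finset.range L.length, F (ℓ i)
      = chainW g L + (u (ℓ n) (π (ℓ 0)) - u (ℓ 0) (π (ℓ 0))) := by
    rw [Finset.sum_congr rfl hform, Finset.sum_sub_distrib, hA, hD, hch,
      Finset.sum_sub_distrib]
    ring
  have hhead : L.head hne = ℓ 0 := by
    rw [hℓ]
    simp only []
    rw [List.getD_eq_getElem L default (by omega), List.head_eq_getElem_zero]
  have hlast : L.getLast hne = ℓ n := by
    rw [hℓ]
    simp only []
    rw [List.getD_eq_getElem L default (by omega)]
    rw [List.getLast_eq_getElem]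
    congr 1
    omega
  rw [h3, key] at h2
  rw [hhead, hlast]
  exact h2

end EEICAux2

namespace EEICAux3
open EEICAux EEICAux2

theorem exists_potential {T : Type} [Fintype T] [Nonempty T]
    (u : T → T → ℝ) (π : Equiv.Perm T)
    (hπ : ∀ ρ : Equiv.Perm T, (∑ t, u t (ρ t)) ≤ ∑ t, u t (π t))
    (hIRu : ∀ t, 0 ≤ u t t) :
    ∃ U : T → ℝ,
      (∀ t, 0 ≤ U t) ∧
      (∀ t s, (u t (π s) - u s (π s)) + U s ≤ U t) ∧
      (∀ t, U t ≤ u t (π t)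
        - Finset.univ.inf' Finset.univ_nonempty (fun e => u e (π t))) ∧
      (∀ t, U t ≤ u t (π t)
        + ∑ s, ((Finset.univ.sup' Finset.univ_nonempty (u s)) - u s (π s))) := by
  classical
  haveI : Inhabited T := Classical.inhabited_of_nonempty ‹_›
  set g : T → T → ℝ := fun t s => u t (π s) - u s (π s) with hg
  set S : T → Set ℝ :=
    fun t => {r | ∃ L : List T, L.Nodup ∧ L.head? = some t ∧ chainW g L = r} with hS
  have hmem0 : ∀ t, (0 : ℝ) ∈ S t := by
    intro t
    exact ⟨[t], by simp, rfl, rfl⟩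
  have hub : ∀ t s, u t s ≤ Finset.univ.sup' Finset.univ_nonempty (u t) :=
    fun t s => Finset.le_sup' _ (Finset.mem_univ s)
  set h : T → ℝ :=
    fun s => (Finset.univ.sup' Finset.univ_nonempty (u s)) - u s (π s) with hh
  have hh0 : ∀ s, 0 ≤ h s := fun s => sub_nonneg.mpr (hub s (π s))
  have hsup0 : ∀ s, 0 ≤ Finset.univ.sup' Finset.univ_nonempty (u s) :=
    fun s => le_trans (hIRu s) (hub s s)
  -- every candidate value is bounded by u t (π t) + ∑ h
  have hboundD : ∀ t r, r ∈ S t → r ≤ u t (π t) + ∑ s, h s := by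
    rintro t r ⟨L, hnd, hhd, rfl⟩
    obtain ⟨l, rfl⟩ : ∃ l, L = t :: l := by
      cases L with
      | nil => simp at hhd
      | cons a l => exact ⟨l, by simpa using (Option.some.inj hhd) ▸ rfl⟩
    have hb := chainW_le g h (fun s => u s (π s))
      (fun a b => by
        have := hub a (π b)
        simp only [hg, hh]
        linarith) l t
    set e := (t :: l).getLast (List.cons_ne_nil t l) with he
    have hmap : ((t :: l).map h).sum ≤ ∑ s, h s := by
      rw [← List.sum_toFinset _ hnd]
      exact Finset.sum_le_sum_of_subset_of_nonneg (Finset.subset_univ _)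
        (fun s _ _ => hh0 s)
    have hee : 0 ≤ h e + u e (π e) := by
      have := hsup0 e
      simp only [hh]
      linarith
    linarith
  -- every candidate value is bounded using the cycle bound
  have hboundC : ∀ t r, r ∈ S t →
      r ≤ u t (π t) - Finset.univ.inf' Finset.univ_nonempty (fun e => u e (π t)) := by
    rintro t r ⟨L, hnd, hhd, rfl⟩
    have hne : L ≠ [] := by
      cases L with
      | nil => simp at hhd
      | cons a l => simp
    have hhead : L.head hne = t := by
      have := List.head?_eq_head hne
      rw [hhd] at this
      exact (Option.some.inj this).symm
    have hcyc := cycle_bound u π hπ L hne hnd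
    rw [hhead] at hcyc
    have hinf : Finset.univ.inf' Finset.univ_nonempty (fun e => u e (π t))
        ≤ u (L.getLast hne) (π t) := Finset.inf'_le _ (Finset.mem_univ _)
    simp only [hg] at hcyc ⊢
    linarith
  have hSne : ∀ t, (S t).Nonempty := fun t => ⟨0, hmem0 t⟩
  have hbdd : ∀ t, BddAbove (S t) :=
    fun t => ⟨u t (π t) + ∑ s, h s, fun r hr => hboundD t r hr⟩
  set U : T → ℝ := fun t => sSup (S t) with hU
  have hU0 : ∀ t, 0 ≤ U t := fun t => le_csSup (hbdd t) (hmem0 t)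
  have hKey : ∀ t s, g t s + U s ≤ U t := by
    intro t s
    by_cases hts : t = s
    · subst hts
      have : g t t = 0 := by simp [hg]
      rw [this, zero_add]
    have hstep : ∀ r ∈ S s, g t s + r ≤ U t := by
      rintro r ⟨L, hnd, hhd, rfl⟩
      obtain ⟨l, rfl⟩ : ∃ l, L = s :: l := by
        cases L with
        | nil => simp at hhd
        | cons a l => exact ⟨l, by simpa using (Option.some.inj hhd) ▸ rfl⟩
      by_cases htL : t ∈ s :: l
      · obtain ⟨A, B, hAB⟩ := List.append_of_mem htL
        have hndAB : (A ++ t :: B).Nodup := hAB ▸ hnd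
        have hndA : A.Nodup := (List.nodup_append'.mp hndAB).1
        have hndtB : (t :: B).Nodup := (List.nodup_append'.mp hndAB).2.1
        have htA : t ∉ A := by
          intro hmem
          exact (List.nodup_append'.mp hndAB).2.2 hmem List.mem_cons_self
        have hndtA : (t :: A).Nodup := List.nodup_cons.mpr ⟨htA, hndA⟩
        have hAne : A ≠ [] := by
          rintro rfl
          simp only [List.nil_append] at hAB
          exact hts (by
            have := List.head_eq_of_cons_eq hAB
            exact this.symm ▸ rfl)
        obtain ⟨a, A', rfl⟩ : ∃ a A', A = a :: A' := by
          cases A with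
          | nil => exact absurd rfl hAne
          | cons a A' => exact ⟨a, A', rfl⟩
        have has : s = a := by
          have := List.head_eq_of_cons_eq hAB.symm
          exact this.symm
        subst has
        -- decomposition
        have hsplit : chainW g (s :: l) = chainW g ((s :: A') ++ [t]) + chainW g (t :: B) := by
          rw [hAB]
          exact chainW_split g (s :: A') t B
        have hsnoc : chainW g ((t :: s :: A') ++ [t])
            = chainW g (t :: s :: A') + g ((t :: s :: A').getLast (List.cons_ne_nil _ _)) t :=
          chainW_snoc g (t :: s :: A') (List.cons_ne_nil _ _) t
        have hcons : chainW g ((t :: s :: A') ++ [t])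
            = g t s + chainW g ((s :: A') ++ [t]) := by
          simp only [List.cons_append, chainW_cons2]
        have hcyc := cycle_bound u π hπ (t :: s :: A') (List.cons_ne_nil _ _) hndtA
        have hheadt : (t :: s :: A').head (List.cons_ne_nil _ _) = t := rfl
        rw [hheadt] at hcyc
        -- g (getLast) t = u (getLast) (π t) - u t (π t)
        have hgl : g ((t :: s :: A').getLast (List.cons_ne_nil _ _)) t
            = u ((t :: s :: A').getLast (List.cons_ne_nil _ _)) (π t) - u t (π t) := by
          simp [hg]
        have hneg : g t s + chainW g ((s :: A') ++ [t]) ≤ 0 := by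
          rw [← hcons, hsnoc, hgl]
          have : chainW (fun t s => u t (π s) - u s (π s)) (t :: s :: A') = chainW g (t :: s :: A') := by
            rw [hg]
          linarith [hcyc, this ▸ hcyc]
        have hmem : chainW g (t :: B) ∈ S t := ⟨t :: B, hndtB, rfl, rfl⟩
        have hle : chainW g (t :: B) ≤ U t := le_csSup (hbdd t) hmem
        rw [hsplit]
        linarith
      · have hmem : chainW g (t :: s :: l) ∈ S t :=
          ⟨t :: s :: l, List.nodup_cons.mpr ⟨htL, hnd⟩, rfl, rfl⟩
        have hle : chainW g (t :: s :: l) ≤ U t := le_csSup (hbdd t) hmem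
        rw [chainW_cons2] at hle
        linarith
    have h1 : sSup (S s) ≤ U t - g t s :=
      csSup_le (hSne s) (fun r hr => by linarith [hstep r hr])
    have h2 : U s = sSup (S s) := rfl
    linarith [h1]
  refine ⟨U, hU0, ?_, ?_, ?_⟩
  · intro t s
    have := hKey t s
    simp only [hg] at this
    exact this
  · intro t
    exact csSup_le (hSne t) (fun r hr => hboundC t r hr)
  · intro t
    have := csSup_le (hSne t) (fun r hr => hboundD t r hr)
    simp only [hh] at this
    exact this

end EEICAux3


/-- For a single agent with uniform type distribution over `m` types,
every `ε`-EEIC and IR mechanism can be transformed into a BIC and IR mechanism with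
at least the same expected social welfare and expected revenue loss at most `m·ε`. -/
theorem epsEEIC_to_BIC_uniform
    {T O : Type} [Fintype T] [Fintype O] [Nonempty T]
    (m : ℕ) (hm : Fintype.card T = m)
    (v : T → O → ℝ) (hv : ∀ t o, 0 ≤ v t o)
    (ε : ℝ) (hε : 0 ≤ ε)
    (x : T → O → ℝ) (p : T → ℝ)
    (hx0 : ∀ t o, 0 ≤ x t o) (hx1 : ∀ t, ∑ o, x t o = 1)
    (hp : ∀ t, 0 ≤ p t)
    -- M is ε-EEIC
    (hEEIC : ∑ t, (1 / (m : ℝ)) *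
        ((Finset.univ.sup' Finset.univ_nonempty fun t' => (∑ o, x t' o * v t o) - p t')
          - ((∑ o, x t o * v t o) - p t)) ≤ ε)
    -- M is IR
    (hIR : ∀ t : T, 0 ≤ (∑ o, x t o * v t o) - p t) :
    ∃ (x' : T → O → ℝ) (p' : T → ℝ),
      (∀ t o, 0 ≤ x' t o) ∧ (∀ t, ∑ o, x' t o = 1) ∧ (∀ t, 0 ≤ p' t) ∧
      -- M' is BIC
      (∀ t t' : T,
        (∑ o, x' t o * v t o) - p' t ≥ (∑ o, x' t' o * v t o) - p' t') ∧
      -- M' is IR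
      (∀ t : T, 0 ≤ (∑ o, x' t o * v t o) - p' t) ∧
      -- W(M') ≥ W(M)
      (∑ t, (1 / (m : ℝ)) * ∑ o, x' t o * v t o)
        ≥ (∑ t, (1 / (m : ℝ)) * ∑ o, x t o * v t o) ∧
      -- R(M') ≥ R(M) − m·ε
      (∑ t, (1 / (m : ℝ)) * p' t) ≥ (∑ t, (1 / (m : ℝ)) * p t) - m * ε := by
  classical
  have hm0 : 0 < m := hm ▸ Fintype.card_pos
  have hmR : (0 : ℝ) < (m : ℝ) := by exact_mod_cast hm0
  -- choose a welfare-maximizing (w.r.t. utilities) permutation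
  obtain ⟨π, -, hπ'⟩ := Finset.exists_max_image (Finset.univ : Finset (Equiv.Perm T))
    (fun ρ => ∑ t, ((∑ o, x (ρ t) o * v t o) - p (ρ t))) ⟨1, Finset.mem_univ 1⟩
  have hπ : ∀ ρ : Equiv.Perm T,
      (∑ t, ((∑ o, x (ρ t) o * v t o) - p (ρ t)))
        ≤ ∑ t, ((∑ o, x (π t) o * v t o) - p (π t)) :=
    fun ρ => hπ' ρ (Finset.mem_univ ρ)
  obtain ⟨U, hU0, hKey, hC, hD⟩ :=
    EEICAux3.exists_potential (fun t s => (∑ o, x s o * v t o) - p s) π hπ hIR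
  -- restate the properties of U in beta-reduced form
  have hKey' : ∀ t s : T,
      (((∑ o, x (π s) o * v t o) - p (π s)) - ((∑ o, x (π s) o * v s o) - p (π s)))
        + U s ≤ U t := hKey
  have hC' : ∀ t : T, U t ≤ ((∑ o, x (π t) o * v t o) - p (π t))
      - Finset.univ.inf' Finset.univ_nonempty
          (fun e => (∑ o, x (π t) o * v e o) - p (π t)) := hC
  have hD' : ∀ t : T, U t ≤ ((∑ o, x (π t) o * v t o) - p (π t))
      + ∑ s, ((Finset.univ.sup' Finset.univ_nonempty
          (fun s' => (∑ o, x s' o * v s o) - p s'))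
        - ((∑ o, x (π s) o * v s o) - p (π s))) := hD
  -- abbreviations
  set H : ℝ := ∑ s, ((Finset.univ.sup' Finset.univ_nonempty
      (fun s' => (∑ o, x s' o * v s o) - p s'))
    - ((∑ o, x (π s) o * v s o) - p (π s))) with hH
  have hid : (∑ t, ((∑ o, x t o * v t o) - p t))
      ≤ ∑ t, ((∑ o, x (π t) o * v t o) - p (π t)) := by
    have := hπ 1
    simpa using this
  have hpsum : ∑ t, p (π t) = ∑ t, p t := Equiv.sum_comp π p
  -- H ≤ m ε
  have hHm : H ≤ (m : ℝ) * ε := by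
    have hG : H ≤ ∑ t, ((Finset.univ.sup' Finset.univ_nonempty
        (fun s' => (∑ o, x s' o * v t o) - p s')) - ((∑ o, x t o * v t o) - p t)) := by
      have r1 : H = (∑ t, Finset.univ.sup' Finset.univ_nonempty
            (fun s' => (∑ o, x s' o * v t o) - p s'))
          - ∑ t, ((∑ o, x (π t) o * v t o) - p (π t)) := by
        rw [hH, Finset.sum_sub_distrib]
      have r2 : ∑ t, ((Finset.univ.sup' Finset.univ_nonempty
            (fun s' => (∑ o, x s' o * v t o) - p s')) - ((∑ o, x t o * v t o) - p t))
          = (∑ t, Finset.univ.sup' Finset.univ_nonempty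
              (fun s' => (∑ o, x s' o * v t o) - p s'))
            - ∑ t, ((∑ o, x t o * v t o) - p t) := Finset.sum_sub_distrib _ _
      rw [r1, r2]
      linarith [hid]
    have hEE2 : (1 / (m : ℝ)) * (∑ t, ((Finset.univ.sup' Finset.univ_nonempty
        (fun s' => (∑ o, x s' o * v t o) - p s')) - ((∑ o, x t o * v t o) - p t))) ≤ ε := by
      rw [Finset.mul_sum]
      exact hEEIC
    have hinv : (m : ℝ) * (1 / (m : ℝ)) = 1 := by field_simp
    have hmul := mul_le_mul_of_nonneg_left hEE2 hmR.le
    rw [← mul_assoc, hinv, one_mul] at hmul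
    linarith
  refine ⟨fun t => x (π t), fun t => (∑ o, x (π t) o * v t o) - U t,
    fun t o => hx0 _ _, fun t => hx1 _, ?_, ?_, ?_, ?_, ?_⟩
  · -- payments nonnegative
    intro t
    show 0 ≤ (∑ o, x (π t) o * v t o) - U t
    have h1 := hC' t
    have h2 : -(p (π t)) ≤ Finset.univ.inf' Finset.univ_nonempty
        (fun e => (∑ o, x (π t) o * v e o) - p (π t)) := by
      apply Finset.le_inf'
      intro e _
      have : 0 ≤ ∑ o, x (π t) o * v e o :=
        Finset.sum_nonneg (fun o _ => mul_nonneg (hx0 _ _) (hv _ _))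
      linarith
    have h3 := hp (π t)
    linarith
  · -- BIC
    intro t t'
    show (∑ o, x (π t) o * v t o) - ((∑ o, x (π t) o * v t o) - U t)
      ≥ (∑ o, x (π t') o * v t o) - ((∑ o, x (π t') o * v t' o) - U t')
    have := hKey' t t'
    linarith
  · -- IR
    intro t
    show 0 ≤ (∑ o, x (π t) o * v t o) - ((∑ o, x (π t) o * v t o) - U t)
    linarith [hU0 t]
  · -- welfare
    show (∑ t, (1 / (m : ℝ)) * ∑ o, x (π t) o * v t o)
      ≥ ∑ t, (1 / (m : ℝ)) * ∑ o, x t o * v t o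
    rw [← Finset.mul_sum, ← Finset.mul_sum]
    have l1 : ∑ t, ((∑ o, x (π t) o * v t o) - p (π t))
        = (∑ t, ∑ o, x (π t) o * v t o) - ∑ t, p (π t) := Finset.sum_sub_distrib _ _
    have l2 : ∑ t, ((∑ o, x t o * v t o) - p t)
        = (∑ t, ∑ o, x t o * v t o) - ∑ t, p t := Finset.sum_sub_distrib _ _
    have hW : (∑ t, ∑ o, x t o * v t o) ≤ ∑ t, ∑ o, x (π t) o * v t o := by
      linarith [hid, hpsum]
    have hpos : (0 : ℝ) ≤ 1 / (m : ℝ) := by positivity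
    exact mul_le_mul_of_nonneg_left hW hpos
  · -- revenue
    show ∑ t, (1 / (m : ℝ)) * ((∑ o, x (π t) o * v t o) - U t)
      ≥ (∑ t, (1 / (m : ℝ)) * p t) - m * ε
    have hp' : ∀ t, p (π t) - H ≤ (∑ o, x (π t) o * v t o) - U t := by
      intro t
      have := hD' t
      linarith
    have hpos : (0 : ℝ) ≤ 1 / (m : ℝ) := by positivity
    have step1 : ∑ t, (1 / (m : ℝ)) * (p (π t) - H)
        ≤ ∑ t, (1 / (m : ℝ)) * ((∑ o, x (π t) o * v t o) - U t) :=
      Finset.sum_le_sum (fun t _ => mul_le_mul_of_nonneg_left (hp' t) hpos)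
    have step2 : ∑ t, (1 / (m : ℝ)) * (p (π t) - H)
        = (∑ t, (1 / (m : ℝ)) * p (π t)) - (m : ℝ) * ((1 / (m : ℝ)) * H) := by
      have : ∀ t : T, (1 / (m : ℝ)) * (p (π t) - H)
          = (1 / (m : ℝ)) * p (π t) - (1 / (m : ℝ)) * H := fun t => by ring
      rw [Finset.sum_congr rfl (fun t _ => this t), Finset.sum_sub_distrib,
        Finset.sum_const, Finset.card_univ, hm, nsmul_eq_mul]
    have step3 : ∑ t, (1 / (m : ℝ)) * p (π t) = ∑ t, (1 / (m : ℝ)) * p t :=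
      Equiv.sum_comp π (fun s => (1 / (m : ℝ)) * p s)
    have step4 : (m : ℝ) * ((1 / (m : ℝ)) * H) = H := by field_simp
    linarith [hHm, step1, step2, step3, step4]
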